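/- arXiv:1811.07410 — 3 statements merged into one kernel-verified Lean document; each statement's English description precedes it below -/
import Mathlib

section
/- Let A, A', B, B' be positive semidefinite operators on a finite-dimensional complex inner product space with A' ≥ A and B' ≥ B in the Loewner order. Then ‖√A' · √B'‖ ≥ ‖√A · √B‖, where √X denotes the positive semidefinite square root of X and ‖·‖ denotes the operator norm (Schatten ∞-norm, i.e. the largest singular value). -/
set_option maxHeartbeats 1000000
set_option synthInstance.maxHeartbeats 1000000

open Matrix ComplexOrder

/-- The operator norm (Schatten ∞-norm, largest singular value) of a complex square
matrix, viewed as an operator on the Euclidean space `ℂ^d`. -/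
noncomputable def opNorm {d : ℕ} (A : Matrix (Fin d) (Fin d) ℂ) : ℝ :=
  ‖Matrix.toEuclideanCLM (𝕜 := ℂ) A‖

/-- The positive semidefinite square root of a positive semidefinite matrix
(the definition of `Matrix.PosSemidef.sqrt` from the older Mathlib, since removed). -/
noncomputable def Matrix.PosSemidef.sqrt {n 𝕜 : Type*} [Fintype n] [RCLike 𝕜] [DecidableEq n]
    {A : Matrix n n 𝕜} (hA : A.PosSemidef) : Matrix n n 𝕜 :=
  hA.1.eigenvectorUnitary.1 * diagonal ((↑) ∘ (√·) ∘ hA.1.eigenvalues) *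
  (star hA.1.eigenvectorUnitary : Matrix n n 𝕜)

lemma Matrix.PosSemidef.posSemidef_sqrt {n 𝕜 : Type*} [Fintype n] [RCLike 𝕜] [DecidableEq n]
    {A : Matrix n n 𝕜} (hA : A.PosSemidef) : hA.sqrt.PosSemidef := by
  have hD : (diagonal ((↑) ∘ (√·) ∘ hA.1.eigenvalues : n → 𝕜)).PosSemidef :=
    posSemidef_diagonal_iff.2 fun i => by
      simp only [Function.comp_apply]
      exact RCLike.ofReal_nonneg.mpr (Real.sqrt_nonneg _)
  have := hD.mul_mul_conjTranspose_same (hA.1.eigenvectorUnitary : Matrix n n 𝕜)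
  rw [Matrix.PosSemidef.sqrt, star_eq_conjTranspose]
  exact this

lemma Matrix.PosSemidef.sqrt_mul_self {n 𝕜 : Type*} [Fintype n] [RCLike 𝕜] [DecidableEq n]
    {A : Matrix n n 𝕜} (hA : A.PosSemidef) : hA.sqrt * hA.sqrt = A := by
  have hU : (star hA.1.eigenvectorUnitary : Matrix n n 𝕜) * hA.1.eigenvectorUnitary.1 = 1 :=
    Unitary.star_mul_self_of_mem hA.1.eigenvectorUnitary.2
  have hDD : diagonal ((↑) ∘ (√·) ∘ hA.1.eigenvalues : n → 𝕜) *
      diagonal ((↑) ∘ (√·) ∘ hA.1.eigenvalues : n → 𝕜) =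
      diagonal (RCLike.ofReal ∘ hA.1.eigenvalues) := by
    rw [diagonal_mul_diagonal]
    congr 1
    funext i
    simp only [Function.comp_apply]
    rw [← RCLike.ofReal_mul, Real.mul_self_sqrt (hA.eigenvalues_nonneg i)]
  conv_rhs => rw [hA.1.spectral_theorem, Unitary.conjStarAlgAut_apply]
  rw [Matrix.PosSemidef.sqrt]
  calc _ = hA.1.eigenvectorUnitary.1 * diagonal ((↑) ∘ (√·) ∘ hA.1.eigenvalues : n → 𝕜) *
        ((star hA.1.eigenvectorUnitary : Matrix n n 𝕜) * hA.1.eigenvectorUnitary.1) *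
        diagonal ((↑) ∘ (√·) ∘ hA.1.eigenvalues : n → 𝕜) *
        (star hA.1.eigenvectorUnitary : Matrix n n 𝕜) := by simp only [Matrix.mul_assoc]
    _ = _ := by rw [hU, Matrix.mul_one, Matrix.mul_assoc _ (diagonal _) (diagonal _), hDD]

lemma clm_nonneg {d : ℕ} {M : Matrix (Fin d) (Fin d) ℂ} (hM : M.PosSemidef) :
    0 ≤ Matrix.toEuclideanCLM (𝕜 := ℂ) M := by
  have h : M = star hM.sqrt * hM.sqrt := by
    rw [star_eq_conjTranspose, hM.posSemidef_sqrt.1, hM.sqrt_mul_self]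
  rw [h, _root_.map_mul, map_star]
  exact star_mul_self_nonneg _

/-- If `A ≤ A'` and `B ≤ B'` in the Loewner order (all four matrices positive
semidefinite), then `‖√A' √B'‖ ≥ ‖√A √B‖`. -/
theorem stmt1 {d : ℕ} {A A' B B' : Matrix (Fin d) (Fin d) ℂ}
    (hA : A.PosSemidef) (hA' : A'.PosSemidef) (hB : B.PosSemidef) (hB' : B'.PosSemidef)
    (hAA' : (A' - A).PosSemidef) (hBB' : (B' - B).PosSemidef) :
    opNorm (hA.sqrt * hB.sqrt) ≤ opNorm (hA'.sqrt * hB'.sqrt) := by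
  set f := Matrix.toEuclideanCLM (𝕜 := ℂ) (n := Fin d) with hf
  have key : ∀ {X Y : Matrix (Fin d) (Fin d) ℂ} (hX : X.PosSemidef) (hY : Y.PosSemidef),
      ‖f (hY.sqrt * X * hY.sqrt)‖ = ‖f (hX.sqrt * hY.sqrt)‖ ^ 2 := by
    intro X Y hX hY
    have h1 : hY.sqrt * X * hY.sqrt = star (hX.sqrt * hY.sqrt) * (hX.sqrt * hY.sqrt) := by
      rw [star_eq_conjTranspose, conjTranspose_mul, hX.posSemidef_sqrt.1, hY.posSemidef_sqrt.1,
        Matrix.mul_assoc hY.sqrt X hY.sqrt, Matrix.mul_assoc hY.sqrt hX.sqrt,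
        ← Matrix.mul_assoc hX.sqrt hX.sqrt, hX.sqrt_mul_self]
    rw [h1, _root_.map_mul, map_star, sq]
    exact ContinuousLinearMap.norm_adjoint_comp_self _
  have mono : ∀ {X Y Z : Matrix (Fin d) (Fin d) ℂ} (hZ : Z.PosSemidef)
      (hX : (hZ.sqrt * X * hZ.sqrt).PosSemidef) (hXY : (Y - X).PosSemidef),
      ‖f (hZ.sqrt * X * hZ.sqrt)‖ ≤ ‖f (hZ.sqrt * Y * hZ.sqrt)‖ := by
    intro X Y Z hZ hX hXY
    refine CStarAlgebra.norm_le_norm_of_nonneg_of_le (clm_nonneg hX) ?_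
    rw [← sub_nonneg, ← _root_.map_sub]
    have h2 : hZ.sqrt * Y * hZ.sqrt - hZ.sqrt * X * hZ.sqrt
        = hZ.sqrtᴴ * (Y - X) * hZ.sqrt := by
      rw [hZ.posSemidef_sqrt.1, Matrix.mul_sub, Matrix.sub_mul]
    rw [h2]
    exact clm_nonneg (hXY.conjTranspose_mul_mul_same _)
  have habs : ∀ M : Matrix (Fin d) (Fin d) ℂ, 0 ≤ ‖f M‖ := fun M => norm_nonneg _
  have psdBA : (hB.sqrt * A * hB.sqrt).PosSemidef := by
    have := hA.conjTranspose_mul_mul_same hB.sqrt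
    rwa [hB.posSemidef_sqrt.1] at this
  have psdA'B : (hA'.sqrt * B * hA'.sqrt).PosSemidef := by
    have := hB.conjTranspose_mul_mul_same hA'.sqrt
    rwa [hA'.posSemidef_sqrt.1] at this
  have step1 : ‖f (hA.sqrt * hB.sqrt)‖ ^ 2 ≤ ‖f (hA'.sqrt * hB.sqrt)‖ ^ 2 := by
    rw [← key hA hB, ← key hA' hB]
    exact mono hB psdBA hAA'
  have step2 : ‖f (hB.sqrt * hA'.sqrt)‖ ^ 2 ≤ ‖f (hB'.sqrt * hA'.sqrt)‖ ^ 2 := by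
    rw [← key hB hA', ← key hB' hA']
    exact mono hA' psdA'B hBB'
  have swap : ∀ {X Y : Matrix (Fin d) (Fin d) ℂ} (hX : X.PosSemidef) (hY : Y.PosSemidef),
      ‖f (hX.sqrt * hY.sqrt)‖ = ‖f (hY.sqrt * hX.sqrt)‖ := by
    intro X Y hX hY
    have h3 : hY.sqrt * hX.sqrt = star (hX.sqrt * hY.sqrt) := by
      rw [star_eq_conjTranspose, conjTranspose_mul, hX.posSemidef_sqrt.1, hY.posSemidef_sqrt.1]
    rw [h3, map_star, ContinuousLinearMap.star_eq_adjoint]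
    exact (LinearIsometryEquiv.norm_map ContinuousLinearMap.adjoint _).symm
  have final : ‖f (hA.sqrt * hB.sqrt)‖ ^ 2 ≤ ‖f (hA'.sqrt * hB'.sqrt)‖ ^ 2 := by
    calc ‖f (hA.sqrt * hB.sqrt)‖ ^ 2 ≤ ‖f (hA'.sqrt * hB.sqrt)‖ ^ 2 := step1
    _ = ‖f (hB.sqrt * hA'.sqrt)‖ ^ 2 := by rw [swap hA' hB]
    _ ≤ ‖f (hB'.sqrt * hA'.sqrt)‖ ^ 2 := step2
    _ = ‖f (hA'.sqrt * hB'.sqrt)‖ ^ 2 := by rw [swap hB' hA']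
  simp only [opNorm, ← hf]
  nlinarith [habs (hA.sqrt * hB.sqrt), habs (hA'.sqrt * hB'.sqrt), final]
end

section
/- The four two-qubit states ξ_{00}, ξ_{01}, ξ_{10}, ξ_{11} defined in the context form an orthonormal basis of ℂ² ⊗ ℂ² (equivalently, of ℂ⁴). -/
open scoped BigOperators

noncomputable section

/-- The computational-basis qubit state `|a⟩`. -/
def bket (a : Bool) : EuclideanSpace ℂ (Fin 2) := WithLp.toLp 2 fun i =>
  if i = (if a then 1 else 0) then 1 else 0

/-- The Hadamard-basis qubit state `|â⟩ = (|0⟩ + (−1)^a |1⟩)/√2`. -/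
def hket (a : Bool) : EuclideanSpace ℂ (Fin 2) := WithLp.toLp 2 fun i =>
  (Real.sqrt 2 : ℂ)⁻¹ * (if a ∧ i = 1 then -1 else 1)

/-- The BB84 two-qubit state `|ψ^s_{r₀ r₁}⟩`: `|r₀⟩` (computational basis) in tensor
factor `s` and `|r̂₁⟩` (Hadamard basis) in tensor factor `1 − s`. -/
def psiBB84 (s r0 r1 : Bool) : EuclideanSpace ℂ (Fin 2 × Fin 2) := WithLp.toLp 2 fun p =>
  if s then hket r1 p.1 * bket r0 p.2 else bket r0 p.1 * hket r1 p.2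

/-- The four states `ξ_{l₀ l₁}` of Bob's cheating measurement basis. -/
def xiv : Bool × Bool → EuclideanSpace ℂ (Fin 2 × Fin 2)
  | (false, false) =>
      ((Real.sqrt 3 : ℂ) / 2) • psiBB84 false false false
        - ((2 * Real.sqrt 3 : ℂ))⁻¹ •
            (-psiBB84 false false true + psiBB84 false true false + psiBB84 false true true)
  | (false, true) =>
      ((Real.sqrt 3 : ℂ) / 2) • psiBB84 false false true
        - ((2 * Real.sqrt 3 : ℂ))⁻¹ •
            (psiBB84 false false false - psiBB84 false true false + psiBB84 false true true)
  | (true, false) =>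
      ((Real.sqrt 3 : ℂ) / 2) • psiBB84 false true false
        - ((2 * Real.sqrt 3 : ℂ))⁻¹ •
            (-psiBB84 false false false + psiBB84 false false true + psiBB84 false true true)
  | (true, true) =>
      -(((Real.sqrt 3 : ℂ) / 2) • psiBB84 false true true)
        - ((2 * Real.sqrt 3 : ℂ))⁻¹ •
            (psiBB84 false false false + psiBB84 false false true + psiBB84 false true false)

def wv : Bool × Bool → EuclideanSpace ℂ (Fin 2 × Fin 2)
  | (false, false) => WithLp.toLp 2 fun (p : Fin 2 × Fin 2) => !![2, 1; -1, 0] p.1 p.2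
  | (false, true)  => WithLp.toLp 2 fun (p : Fin 2 × Fin 2) => !![1, -2; 0, 1] p.1 p.2
  | (true, false)  => WithLp.toLp 2 fun (p : Fin 2 × Fin 2) => !![0, 1; 1, 2] p.1 p.2
  | (true, true)   => WithLp.toLp 2 fun (p : Fin 2 × Fin 2) => !![-1, 0; -2, 1] p.1 p.2

lemma s2sq : (Real.sqrt 2 : ℂ) * (Real.sqrt 2 : ℂ) = 2 := by
  norm_cast; exact_mod_cast Real.mul_self_sqrt (by norm_num)
lemma s3sq : (Real.sqrt 3 : ℂ) * (Real.sqrt 3 : ℂ) = 3 := by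
  norm_cast; exact_mod_cast Real.mul_self_sqrt (by norm_num)
lemma s2n : (Real.sqrt 2 : ℂ) ≠ 0 := by
  simp only [ne_eq, Complex.ofReal_eq_zero]; positivity
lemma s3n : (Real.sqrt 3 : ℂ) ≠ 0 := by
  simp only [ne_eq, Complex.ofReal_eq_zero]; positivity
lemma i2 : (Real.sqrt 2 : ℂ)⁻¹ = (Real.sqrt 2 : ℂ) / 2 := by
  rw [← s2sq, div_mul_cancel_left₀ s2n]
lemma i3 : (Real.sqrt 3 : ℂ)⁻¹ = (Real.sqrt 3 : ℂ) / 3 := by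
  rw [← s3sq, div_mul_cancel_left₀ s3n]

set_option maxHeartbeats 1000000 in
lemma hxw (k : Bool × Bool) :
    xiv k = ((Real.sqrt 2 : ℂ) * (Real.sqrt 3 : ℂ))⁻¹ • wv k := by
  obtain ⟨⟨⟩|⟨⟩, ⟨⟩|⟨⟩⟩ := k <;>
  · ext p
    obtain ⟨i, j⟩ := p
    fin_cases i <;> fin_cases j <;>
    · simp only [xiv, wv, psiBB84, bket, hket, PiLp.sub_apply, PiLp.add_apply,
        PiLp.neg_apply, PiLp.smul_apply, smul_eq_mul, PiLp.toLp_apply, Fin.isValue, mul_inv,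
        Matrix.cons_val', Matrix.cons_val_zero, Matrix.cons_val_one, Matrix.head_cons,
        Matrix.empty_val', Matrix.cons_val_fin_one, Matrix.head_fin_const, i2, i3]
      norm_num [i2, i3]
      try ring_nf

lemma xiv_orth : Orthonormal ℂ xiv := by
  rw [orthonormal_iff_ite]
  intro i j
  rw [hxw i, hxw j, inner_smul_left, inner_smul_right]
  have hw : (inner ℂ (wv i) (wv j) : ℂ) = if i = j then 6 else 0 := by
    obtain ⟨⟨⟩|⟨⟩, ⟨⟩|⟨⟩⟩ := i <;> obtain ⟨⟨⟩|⟨⟩, ⟨⟩|⟨⟩⟩ := j <;>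
    · simp only [wv, PiLp.inner_apply, PiLp.toLp_apply, Fintype.sum_prod_type, Fin.sum_univ_two,
        Matrix.cons_val', Matrix.cons_val_zero, Matrix.cons_val_one, Matrix.head_cons,
        Matrix.empty_val', Matrix.cons_val_fin_one, Matrix.head_fin_const, Fin.isValue]
      norm_num [Complex.conj_ofNat]
  rw [hw]
  by_cases h : i = j <;> simp only [h, if_true, if_false, Ne, not_false_iff]
  · simp only [map_inv₀, map_mul, Complex.conj_ofReal]
    have h6 : ((Real.sqrt 2:ℂ) * (Real.sqrt 3:ℂ)) * ((Real.sqrt 2:ℂ) * (Real.sqrt 3:ℂ)) = 6 := by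
      rw [mul_mul_mul_comm, s2sq, s3sq]; norm_num
    rw [← mul_assoc, ← mul_inv, h6]; norm_num
  · simp [h]

/-- The four states `ξ_{00}, ξ_{01}, ξ_{10}, ξ_{11}` form an orthonormal basis of
`ℂ² ⊗ ℂ²`. -/
theorem stmt13 :
    Orthonormal ℂ xiv ∧ Submodule.span ℂ (Set.range xiv) = ⊤ := by
  refine ⟨xiv_orth, ?_⟩
  apply xiv_orth.linearIndependent.span_eq_top_of_card_eq_finrank
  simp [finrank_euclideanSpace]

end
end

section
/- (Success probability of Bob's explicit cheating strategy, single round.) With the BB84 two-qubit states ψ^s_{r₀ r₁} and the measurement basis states ξ defined in the context, one has (1/8)·( |⟨ψ^0_{00}|ξ_{00}⟩|² + |⟨ψ^0_{01}|ξ_{01}⟩|² + |⟨ψ^0_{10}|ξ_{10}⟩|² + |⟨ψ^0_{11}|ξ_{11}⟩|² + |⟨ψ^1_{00}|ξ_{11}⟩|² + |⟨ψ^1_{01}|ξ_{00}⟩|² + |⟨ψ^1_{10}|ξ_{10}⟩|² + |⟨ψ^1_{11}|ξ_{01}⟩|² ) = 3/4. -/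
open scoped BigOperators

noncomputable section

set_option maxHeartbeats 1600000 in
/-- The single-round success probability of Bob's explicit cheating strategy is `3/4`. -/
theorem stmt14 :
    (1 / 8 : ℝ) *
        (‖inner (𝕜 := ℂ) (psiBB84 false false false) (xiv (false, false))‖ ^ 2
          + ‖inner (𝕜 := ℂ) (psiBB84 false false true) (xiv (false, true))‖ ^ 2
          + ‖inner (𝕜 := ℂ) (psiBB84 false true false) (xiv (true, false))‖ ^ 2
          + ‖inner (𝕜 := ℂ) (psiBB84 false true true) (xiv (true, true))‖ ^ 2
          + ‖inner (𝕜 := ℂ) (psiBB84 true false false) (xiv (true, true))‖ ^ 2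
          + ‖inner (𝕜 := ℂ) (psiBB84 true false true) (xiv (false, false))‖ ^ 2
          + ‖inner (𝕜 := ℂ) (psiBB84 true true false) (xiv (true, false))‖ ^ 2
          + ‖inner (𝕜 := ℂ) (psiBB84 true true true) (xiv (false, true))‖ ^ 2)
      = 3 / 4 := by
  have key : ∀ (s r0 r1 l0 l1 : Bool) (ε : ℝ),
      inner (𝕜 := ℂ) (psiBB84 s r0 r1) (xiv (l0, l1)) = ((ε * Real.sqrt 3 / 2 : ℝ) : ℂ) →
      ‖inner (𝕜 := ℂ) (psiBB84 s r0 r1) (xiv (l0, l1))‖ ^ 2 = (ε^2) * (3/4) := by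
    intro s r0 r1 l0 l1 ε h
    rw [h, Complex.norm_real, Real.norm_eq_abs, ← abs_pow, abs_of_nonneg (sq_nonneg _)]
    ring_nf
    rw [Real.sq_sqrt (by norm_num : (0:ℝ) ≤ 3)]
    ring
  have h1 := key false false false false false 1 ?_
  have h2 := key false false true false true 1 ?_
  have h3 := key false true false true false 1 ?_
  have h4 := key false true true true true (-1) ?_
  have h5 := key true false false true true (-1) ?_
  have h6 := key true false true false false 1 ?_
  have h7 := key true true false true false 1 ?_
  have h8 := key true true true false true (-1) ?_
  · rw [h1, h2, h3, h4, h5, h6, h7, h8]; norm_num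
  all_goals {
    simp only [xiv, PiLp.inner_apply, Fintype.sum_prod_type, Fin.sum_univ_two,
      PiLp.sub_apply, PiLp.add_apply, PiLp.smul_apply, PiLp.neg_apply,
      psiBB84, bket, hket, smul_eq_mul]
    norm_num [Complex.ext_iff]
    ring_nf
    norm_num [Real.sq_sqrt]
    try ring }

end
end
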